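/- Let Q and f be real numbers with f > 0 and Q > √f (so in particular Q^2 − f > 0). Then for all real y1, complex y2, and all real θ, if (y1, y2) ≠ (0,0) then (Q^2 − f)·y1^2 + Q·|y2|^2 + √f · Re(e^{iθ}·y2^2) > 0. Consequently the conic 2(Q^2−f)y1^2 + √f·e^{iθ}y2^2 + 2Q·y2y3 + √f·e^{−iθ}y3^2 = 0 has no real points with respect to the real structure (y1:y2:y3) ↦ (conj y1 : conj y3 : conj y2). -/

import Mathlib

/-- If `f > 0` and `Q > √f`, then for `(y1, y2) ≠ (0,0)` (`y1` real, `y2` complex)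
and any real `θ`, `(Q^2 - f) y1^2 + Q |y2|^2 + √f Re(e^{iθ} y2^2) > 0`.
Consequently the conic `2(Q^2-f)y1^2 + √f e^{iθ} y2^2 + 2Q y2 y3 + √f e^{-iθ} y3^2 = 0`
has no real points with respect to the real structure
`(y1:y2:y3) ↦ (conj y1 : conj y3 : conj y2)`. -/
theorem stmt6 (Q f : ℝ) (hf : 0 < f) (hQ : Real.sqrt f < Q) :
    (∀ (y1 : ℝ) (y2 : ℂ) (θ : ℝ), ¬(y1 = 0 ∧ y2 = 0) →
      0 < (Q ^ 2 - f) * y1 ^ 2 + Q * Complex.normSq y2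
          + Real.sqrt f * (Complex.exp ((θ : ℂ) * Complex.I) * y2 ^ 2).re)
    ∧ ∀ θ : ℝ, ¬ ∃ y1 y2 y3 : ℂ, (y1, y2, y3) ≠ (0, 0, 0) ∧
        2 * ((Q : ℂ) ^ 2 - (f : ℂ)) * y1 ^ 2
          + (Real.sqrt f : ℂ) * Complex.exp ((θ : ℂ) * Complex.I) * y2 ^ 2
          + 2 * (Q : ℂ) * y2 * y3
          + (Real.sqrt f : ℂ) * Complex.exp (-((θ : ℂ) * Complex.I)) * y3 ^ 2 = 0 ∧
        ∃ c : ℂ, c ≠ 0 ∧ (starRingEnd ℂ) y1 = c * y1 ∧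
          (starRingEnd ℂ) y3 = c * y2 ∧ (starRingEnd ℂ) y2 = c * y3 := by
  have hsf : 0 ≤ Real.sqrt f := Real.sqrt_nonneg f
  have hfs : Real.sqrt f ^ 2 = f := Real.sq_sqrt hf.le
  have part1 : ∀ (y1 : ℝ) (y2 : ℂ) (θ : ℝ), ¬(y1 = 0 ∧ y2 = 0) →
      0 < (Q ^ 2 - f) * y1 ^ 2 + Q * Complex.normSq y2
          + Real.sqrt f * (Complex.exp ((θ : ℂ) * Complex.I) * y2 ^ 2).re := by
    intro y1 y2 θ h
    have hre : -(Complex.normSq y2) ≤ (Complex.exp ((θ:ℂ)*Complex.I) * y2 ^ 2).re := by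
      have h1 := Complex.abs_re_le_norm (Complex.exp ((θ:ℂ)*Complex.I) * y2 ^ 2)
      have h1' := neg_abs_le (Complex.exp ((θ:ℂ)*Complex.I) * y2 ^ 2).re
      have h2 : ‖Complex.exp ((θ:ℂ)*Complex.I) * y2 ^ 2‖ = Complex.normSq y2 := by
        rw [norm_mul, Complex.norm_exp_ofReal_mul_I, one_mul, norm_pow, Complex.sq_norm]
      linarith
    have hns : 0 ≤ Complex.normSq y2 := Complex.normSq_nonneg y2
    have hp1 : Real.sqrt f * (-(Complex.normSq y2)) ≤
        Real.sqrt f * (Complex.exp ((θ:ℂ)*Complex.I) * y2 ^ 2).re :=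
      mul_le_mul_of_nonneg_left hre hsf
    have hp2 : Real.sqrt f * Complex.normSq y2 ≤ Q * Complex.normSq y2 :=
      mul_le_mul_of_nonneg_right hQ.le hns
    have hQf : 0 < Q ^ 2 - f := by nlinarith
    rcases not_and_or.mp h with h' | h'
    · have hy : 0 < y1 ^ 2 := by positivity
      nlinarith
    · have hy : 0 < Complex.normSq y2 := Complex.normSq_pos.mpr h'
      nlinarith [mul_pos (sub_pos.mpr hQ) hy, mul_nonneg hQf.le (sq_nonneg y1)]
  refine ⟨part1, ?_⟩
  rintro θ ⟨y1, y2, y3, hne, heq, c, hc, h1, h3, h2⟩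
  -- |c|^2 = 1
  have h1' : y1 = (starRingEnd ℂ) c * (starRingEnd ℂ) y1 := by
    have := congrArg (starRingEnd ℂ) h1
    simpa [map_mul] using this
  have h2' : y2 = (starRingEnd ℂ) c * (starRingEnd ℂ) y3 := by
    have := congrArg (starRingEnd ℂ) h2
    simpa [map_mul] using this
  have h3' : y3 = (starRingEnd ℂ) c * (starRingEnd ℂ) y2 := by
    have := congrArg (starRingEnd ℂ) h3
    simpa [map_mul] using this
  have e1 : ((starRingEnd ℂ) c * c - 1) * y1 = 0 := by
    linear_combination (-(starRingEnd ℂ) c) * h1 - h1'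
  have e2 : ((starRingEnd ℂ) c * c - 1) * y2 = 0 := by
    linear_combination (-(starRingEnd ℂ) c) * h3 - h2'
  have e3 : ((starRingEnd ℂ) c * c - 1) * y3 = 0 := by
    linear_combination (-(starRingEnd ℂ) c) * h2 - h3'
  have hy : y1 ≠ 0 ∨ y2 ≠ 0 ∨ y3 ≠ 0 := by
    by_contra h
    push_neg at h
    exact hne (by simp [h.1, h.2.1, h.2.2, Prod.ext_iff])
  have hcc : (starRingEnd ℂ) c * c = 1 := by
    rcases hy with h | h | h
    · rcases mul_eq_zero.mp e1 with h' | h'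
      · linear_combination h'
      · exact absurd h' h
    · rcases mul_eq_zero.mp e2 with h' | h'
      · linear_combination h'
      · exact absurd h' h
    · rcases mul_eq_zero.mp e3 with h' | h'
      · linear_combination h'
      · exact absurd h' h
  have hnc : Complex.normSq c = 1 := by
    have hx : ((Complex.normSq c : ℝ) : ℂ) = 1 := by
      rw [← Complex.mul_conj c]
      linear_combination hcc
    exact_mod_cast hx
  -- square root of c
  obtain ⟨l, hl⟩ : ∃ l : ℂ, l ^ 2 = c := IsAlgClosed.exists_pow_nat_eq c two_pos
  have hl0 : l ≠ 0 := by
    intro h; apply hc; rw [← hl, h]; ring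
  have hnl : Complex.normSq l = 1 := by
    have h4 : Complex.normSq l ^ 2 = 1 := by
      have h5 : Complex.normSq (l ^ 2) = Complex.normSq c := by rw [hl]
      rw [map_pow, hnc] at h5
      exact h5
    nlinarith [Complex.normSq_nonneg l]
  have hlc : (starRingEnd ℂ) l * c = l := by
    have hml : (starRingEnd ℂ) l * l = 1 := by
      have := Complex.mul_conj l
      rw [hnl] at this
      simpa [mul_comm] using this
    calc (starRingEnd ℂ) l * c = (starRingEnd ℂ) l * l * l := by rw [← hl]; ring
    _ = l := by rw [hml, one_mul]
  set z1 := l * y1 with hz1def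
  set z2 := l * y2 with hz2def
  set z3 := l * y3 with hz3def
  have hz1 : (starRingEnd ℂ) z1 = z1 := by
    rw [hz1def, map_mul, h1, ← mul_assoc, hlc]
  have hz3 : (starRingEnd ℂ) z2 = z3 := by
    rw [hz2def, map_mul, h2, ← mul_assoc, hlc, hz3def]
  have ha : z1 = ((z1.re : ℝ) : ℂ) := (Complex.conj_eq_iff_re.mp hz1).symm
  set a := z1.re with hadef
  -- conic at z
  have hEz : 2 * ((Q : ℂ) ^ 2 - (f : ℂ)) * z1 ^ 2
      + (Real.sqrt f : ℂ) * Complex.exp ((θ : ℂ) * Complex.I) * z2 ^ 2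
      + 2 * (Q : ℂ) * z2 * z3
      + (Real.sqrt f : ℂ) * Complex.exp (-((θ : ℂ) * Complex.I)) * z3 ^ 2 = 0 := by
    rw [hz1def, hz2def, hz3def]
    linear_combination l ^ 2 * heq
  rw [← hz3, ha] at hEz
  set W := (Real.sqrt f : ℂ) * Complex.exp ((θ : ℂ) * Complex.I) * z2 ^ 2 with hWdef
  have hexp : (starRingEnd ℂ) (Complex.exp ((θ:ℂ)*Complex.I)) = Complex.exp (-((θ:ℂ)*Complex.I)) := by
    rw [← Complex.exp_conj, map_mul, Complex.conj_ofReal, Complex.conj_I, mul_neg]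
  have hw : (Real.sqrt f : ℂ) * Complex.exp (-((θ : ℂ) * Complex.I)) * ((starRingEnd ℂ) z2) ^ 2
      = (starRingEnd ℂ) W := by
    conv_rhs => rw [hWdef, map_mul, map_mul, map_pow, hexp, Complex.conj_ofReal]
  rw [hw] at hEz
  -- turn into real equation
  have hWconj : W + (starRingEnd ℂ) W = ((2 * W.re : ℝ) : ℂ) := Complex.add_conj W
  have hz2c : z2 * (starRingEnd ℂ) z2 = ((Complex.normSq z2 : ℝ) : ℂ) := Complex.mul_conj z2
  have hcast : ((2 * (Q ^ 2 - f) * a ^ 2 + 2 * W.re + 2 * Q * Complex.normSq z2 : ℝ) : ℂ) = 0 := by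
    push_cast at hWconj hz2c ⊢
    linear_combination hEz - hWconj - 2 * (Q : ℂ) * hz2c
  have hre2 : 2 * (Q ^ 2 - f) * a ^ 2 + 2 * W.re + 2 * Q * Complex.normSq z2 = 0 := by
    exact_mod_cast hcast
  have hWre : W.re = Real.sqrt f * (Complex.exp ((θ : ℂ) * Complex.I) * z2 ^ 2).re := by
    rw [hWdef, mul_assoc, Complex.re_ofReal_mul]
  have hnz : ¬ (a = 0 ∧ z2 = 0) := by
    rintro ⟨ha0, hz20⟩
    apply hne
    have hy1 : y1 = 0 := by
      have hzz : z1 = 0 := by rw [ha, ha0]; simp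
      rw [hz1def] at hzz
      exact (mul_eq_zero.mp hzz).resolve_left hl0
    have hy2 : y2 = 0 := by
      rw [hz2def] at hz20
      exact (mul_eq_zero.mp hz20).resolve_left hl0
    have hy3 : y3 = 0 := by
      have hzz : z3 = 0 := by rw [← hz3, hz20]; simp
      rw [hz3def] at hzz
      exact (mul_eq_zero.mp hzz).resolve_left hl0
    simp [hy1, hy2, hy3, Prod.ext_iff]
  have := part1 a z2 θ hnz
  rw [hWre] at hre2
  linarith
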